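/- Let g be an entropy dissipative two-point flux with respect to entropy variables v and potential ψ, and let G be its associated numerical entropy flux. Then for every sequence of states u : ℤ → E and every k ∈ ℤ, the semidiscrete per-cell entropy inequality holds: ⟨v(u_k), g(u_{k−1}, u_k) − g(u_k, u_{k+1})⟩ ≤ G(u_{k−1}, u_k) − G(u_k, u_{k+1}). -/
import Mathlib


open RealInnerProductSpace

/-- Semidiscrete per-cell entropy inequality: for an entropy dissipative two-point
flux `g` with associated numerical entropy flux `G`, for every sequence of states
`u : ℤ → E` and every `k ∈ ℤ`,
`⟨v(u_k), g(u_{k−1}, u_k) − g(u_k, u_{k+1})⟩ ≤ G(u_{k−1}, u_k) − G(u_k, u_{k+1})`. -/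
theorem entropy_dissipative_flux_per_cell_inequality
    (N : ℕ) (hN : 1 ≤ N)
    (g : EuclideanSpace ℝ (Fin N) × EuclideanSpace ℝ (Fin N) → EuclideanSpace ℝ (Fin N))
    (v : EuclideanSpace ℝ (Fin N) → EuclideanSpace ℝ (Fin N))
    (ψ : EuclideanSpace ℝ (Fin N) → ℝ)
    (hED : ∀ a b, ⟪v b - v a, g (a, b)⟫ ≤ ψ b - ψ a)
    (G : EuclideanSpace ℝ (Fin N) → EuclideanSpace ℝ (Fin N) → ℝ)
    (hG : ∀ a b, G a b = (1 / 2) * ⟪v a + v b, g (a, b)⟫ - (1 / 2) * (ψ a + ψ b)) :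
    ∀ (u : ℤ → EuclideanSpace ℝ (Fin N)) (k : ℤ),
      ⟪v (u k), g (u (k - 1), u k) - g (u k, u (k + 1))⟫
        ≤ G (u (k - 1)) (u k) - G (u k) (u (k + 1)) := by
  intro u k
  have h1 := hED (u (k - 1)) (u k)
  have h2 := hED (u k) (u (k + 1))
  rw [hG, hG, inner_sub_right]
  rw [inner_sub_left] at h1 h2
  rw [inner_add_left, inner_add_left]
  linarith
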